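/- ZPostS equals the class of regular languages: a language L ⊆ Σ* is recognized with error bound 0 by some RT-PostPFA if and only if L is regular. -/

import Mathlib

noncomputable section

/-- The input alphabet extended with the two endmarkers `¢` and `$`. -/
inductive ESym (α : Type) : Type where
  | cent : ESym α
  | dollar : ESym α
  | letter : α → ESym α

/-- The state distribution obtained by applying, in order, the matrices for
`¢`, the letters of `w`, and `$` to the standard basis vector at the initial state `0`. -/
def pRun {α : Type} {n : ℕ} (A : ESym α → Matrix (Fin (n + 1)) (Fin (n + 1)) ℝ)
    (w : List α) : Fin (n + 1) → ℝ :=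
  (ESym.cent :: (w.map ESym.letter ++ [ESym.dollar])).foldl
    (fun v σ => (A σ).mulVec v) (Pi.single 0 1)

/-- A real-time probabilistic finite automaton with postselection (RT-PostPFA). -/
structure PostPFA (α : Type) where
  n : ℕ
  A : ESym α → Matrix (Fin (n + 1)) (Fin (n + 1)) ℝ
  nonneg : ∀ σ i j, 0 ≤ A σ i j
  colSum : ∀ σ j, ∑ i, A σ i j = 1
  Qpa : Finset (Fin (n + 1))
  Qpr : Finset (Fin (n + 1))
  disj : Disjoint Qpa Qpr
  postPos : ∀ w : List α,
    0 < (∑ i ∈ Qpa, pRun A w i) + (∑ i ∈ Qpr, pRun A w i)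

/-- Acceptance probability before postselection. -/
def PostPFA.pacc {α : Type} (M : PostPFA α) (w : List α) : ℝ :=
  ∑ i ∈ M.Qpa, pRun M.A w i

/-- Rejection probability before postselection. -/
def PostPFA.prej {α : Type} (M : PostPFA α) (w : List α) : ℝ :=
  ∑ i ∈ M.Qpr, pRun M.A w i

/-- Normalized acceptance probability of an RT-PostPFA. -/
def PostPFA.fa {α : Type} (M : PostPFA α) (w : List α) : ℝ :=
  M.pacc w / (M.pacc w + M.prej w)

/-- Recognition of a language with error bound `ε`. -/
def PostPFA.Recognizes {α : Type} (M : PostPFA α) (L : Set (List α)) (ε : ℝ) : Prop :=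
  ∀ w : List α, (w ∈ L → 1 - ε ≤ M.fa w) ∧ (w ∉ L → M.fa w ≤ ε)

/-- The class of languages recognized by RT-PostPFAs with bounded error. -/
def PostS {α : Type} (L : Set (List α)) : Prop :=
  ∃ (M : PostPFA α) (ε : ℝ), 0 ≤ ε ∧ ε < 1 / 2 ∧ M.Recognizes L ε

/-- Recognition with zero error: `fa = 1` on members, `fa = 0` on non-members. -/
def PostPFA.RecognizesZero {α : Type} (M : PostPFA α) (L : Set (List α)) : Prop :=
  ∀ w : List α, (w ∈ L → M.fa w = 1) ∧ (w ∉ L → M.fa w = 0)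

/-- The class of languages recognized by RT-PostPFAs with zero error. -/
def ZPostS {α : Type} (L : Set (List α)) : Prop :=
  ∃ M : PostPFA α, M.RecognizesZero L

/-! ### Auxiliary lemmas -/

/-- Support of a vector. -/
noncomputable def zsupp {n : ℕ} (v : Fin (n+1) → ℝ) : Finset (Fin (n+1)) :=
  @Finset.filter _ (fun i => v i ≠ 0) (Classical.decPred _) Finset.univ

lemma mem_zsupp {n : ℕ} {v : Fin (n+1) → ℝ} {i : Fin (n+1)} : i ∈ zsupp v ↔ v i ≠ 0 := by
  simp [zsupp]

/-- Deterministic support-step of a matrix. -/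
noncomputable def zstep {n : ℕ} (B : Matrix (Fin (n+1)) (Fin (n+1)) ℝ)
    (S : Finset (Fin (n+1))) : Finset (Fin (n+1)) :=
  @Finset.filter _ (fun i => ∃ j ∈ S, B i j ≠ 0) (Classical.decPred _) Finset.univ

lemma mem_zstep {n : ℕ} {B : Matrix (Fin (n+1)) (Fin (n+1)) ℝ}
    {S : Finset (Fin (n+1))} {i : Fin (n+1)} :
    i ∈ zstep B S ↔ ∃ j ∈ S, B i j ≠ 0 := by
  simp [zstep]

lemma mulVec_nonneg' {n : ℕ} {B : Matrix (Fin (n+1)) (Fin (n+1)) ℝ} {v : Fin (n+1) → ℝ}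
    (hB : ∀ i j, 0 ≤ B i j) (hv : ∀ i, 0 ≤ v i) : ∀ i, 0 ≤ B.mulVec v i := by
  intro i
  simp only [Matrix.mulVec, dotProduct]
  exact Finset.sum_nonneg fun j _ => mul_nonneg (hB i j) (hv j)

lemma zsupp_mulVec {n : ℕ} {B : Matrix (Fin (n+1)) (Fin (n+1)) ℝ} {v : Fin (n+1) → ℝ}
    (hB : ∀ i j, 0 ≤ B i j) (hv : ∀ i, 0 ≤ v i) :
    zsupp (B.mulVec v) = zstep B (zsupp v) := by
  ext i
  rw [mem_zsupp, mem_zstep]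
  simp only [Matrix.mulVec, dotProduct]
  rw [← not_iff_not, not_not, not_exists]
  rw [Finset.sum_eq_zero_iff_of_nonneg (fun j _ => mul_nonneg (hB i j) (hv j))]
  constructor
  · intro h j
    simp only [mem_zsupp, not_and, not_not]
    intro hj
    by_contra hc
    exact hc ((mul_eq_zero.1 (h j (Finset.mem_univ j))).resolve_right hj)
  · intro h j _
    rcases eq_or_ne (v j) 0 with h0 | h0
    · rw [h0, mul_zero]
    · have := h j
      simp only [mem_zsupp, not_and, not_not] at this
      rw [this h0, zero_mul]

lemma foldl_nonneg {α : Type} {n : ℕ} (A : ESym α → Matrix (Fin (n+1)) (Fin (n+1)) ℝ)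
    (hA : ∀ σ i j, 0 ≤ A σ i j) (l : List (ESym α)) :
    ∀ (v : Fin (n+1) → ℝ), (∀ i, 0 ≤ v i) →
      ∀ i, 0 ≤ l.foldl (fun v σ => (A σ).mulVec v) v i := by
  induction l with
  | nil => intro v hv i; exact hv i
  | cons a l ih =>
    intro v hv i
    exact ih _ (mulVec_nonneg' (hA a) hv) i

lemma zsupp_foldl {α : Type} {n : ℕ} (A : ESym α → Matrix (Fin (n+1)) (Fin (n+1)) ℝ)
    (hA : ∀ σ i j, 0 ≤ A σ i j) (l : List (ESym α)) :
    ∀ (v : Fin (n+1) → ℝ), (∀ i, 0 ≤ v i) →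
      zsupp (l.foldl (fun v σ => (A σ).mulVec v) v)
        = l.foldl (fun S σ => zstep (A σ) S) (zsupp v) := by
  induction l with
  | nil => intro v hv; rfl
  | cons a l ih =>
    intro v hv
    simp only [List.foldl_cons]
    rw [ih _ (mulVec_nonneg' (hA a) hv), zsupp_mulVec (hA a) hv]

lemma single_nonneg' {n : ℕ} :
    ∀ i : Fin (n+1), (0:ℝ) ≤ (Pi.single 0 1 : Fin (n+1) → ℝ) i := by
  intro i; rcases eq_or_ne i 0 with h | h <;> simp [Pi.single_apply, h]

lemma zsupp_single {n : ℕ} : zsupp (Pi.single (0 : Fin (n+1)) (1:ℝ)) = {0} := by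
  ext i
  rw [mem_zsupp]
  simp [Pi.single_apply]

lemma pRun_nonneg {α : Type} {n : ℕ} (A : ESym α → Matrix (Fin (n+1)) (Fin (n+1)) ℝ)
    (hA : ∀ σ i j, 0 ≤ A σ i j) (w : List α) : ∀ i, 0 ≤ pRun A w i :=
  foldl_nonneg A hA _ _ single_nonneg'

lemma zsupp_pRun {α : Type} {n : ℕ} (A : ESym α → Matrix (Fin (n+1)) (Fin (n+1)) ℝ)
    (hA : ∀ σ i j, 0 ≤ A σ i j) (w : List α) :
    zsupp (pRun A w) = zstep (A ESym.dollar)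
      ((w.map ESym.letter).foldl (fun S σ => zstep (A σ) S)
        (zstep (A ESym.cent) {0})) := by
  rw [pRun, zsupp_foldl A hA _ _ single_nonneg', zsupp_single]
  simp [List.foldl_append]

lemma detMulVec {n : ℕ} (T : Fin (n+1) → Fin (n+1)) (x : Fin (n+1)) :
    (Matrix.of fun i j => if i = T j then (1:ℝ) else 0).mulVec (Pi.single x 1)
      = Pi.single (T x) 1 := by
  ext i
  simp only [Matrix.mulVec, dotProduct, Matrix.of_apply, Pi.single_apply]
  rw [Finset.sum_eq_single x]
  · simp
  · intro j _ hj; simp [hj]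
  · simp

lemma detFoldl {α : Type} {n : ℕ} (T : ESym α → Fin (n+1) → Fin (n+1)) (l : List (ESym α)) :
    ∀ x, l.foldl
        (fun v σ => ((Matrix.of fun i j => if i = T σ j then (1:ℝ) else 0)).mulVec v)
        (Pi.single x 1)
      = Pi.single (l.foldl (fun x σ => T σ x) x) 1 := by
  induction l with
  | nil => intro x; rfl
  | cons a l ih =>
    intro x
    simp only [List.foldl_cons, detMulVec]
    exact ih _

lemma detPRun {α : Type} {n : ℕ} (T : ESym α → Fin (n+1) → Fin (n+1))
    (A : ESym α → Matrix (Fin (n+1)) (Fin (n+1)) ℝ)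
    (hA : ∀ σ' i j, A σ' i j = if i = T σ' j then (1:ℝ) else 0) (w : List α) :
    pRun A w = Pi.single ((ESym.cent :: (w.map ESym.letter ++ [ESym.dollar])).foldl
      (fun x σ' => T σ' x) 0) 1 := by
  have hM : ∀ σ', A σ' = Matrix.of fun i j => if i = T σ' j then (1:ℝ) else 0 := by
    intro σ'
    ext i j
    rw [hA]
    rfl
  rw [pRun]
  have hfun : (fun (v : Fin (n+1) → ℝ) σ' => (A σ').mulVec v)
      = fun v σ' => ((Matrix.of fun i j => if i = T σ' j then (1:ℝ) else 0)).mulVec v := by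
    funext v σ'
    rw [hM]
  rw [hfun, detFoldl T]

lemma sum_single {n : ℕ} (S : Finset (Fin (n+1))) (x : Fin (n+1)) :
    ∑ i ∈ S, Pi.single x (1:ℝ) i = if x ∈ S then 1 else 0 := by
  simp [Pi.single_apply, Finset.sum_ite_eq']

/-- `ZPostS` equals the class of regular languages. -/
theorem ZPostS_eq_REG {α : Type} [Fintype α] (L : Set (List α)) :
    ZPostS L ↔ Language.IsRegular L := by
  classical
  constructor
  · rintro ⟨M, hM⟩
    -- key fact: w ∈ L ↔ pacc w ≠ 0
    have key : ∀ w : List α, w ∈ L ↔ M.pacc w ≠ 0 := by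
      intro w
      have hpos : 0 < M.pacc w + M.prej w := M.postPos w
      constructor
      · intro hw
        have h1 : M.fa w = 1 := (hM w).1 hw
        rw [PostPFA.fa, div_eq_one_iff_eq (ne_of_gt hpos)] at h1
        intro h0
        rw [h0, zero_add] at h1
        rw [h0, ← h1, add_zero] at hpos
        exact lt_irrefl _ hpos
      · intro h0
        by_contra hw
        have h1 : M.fa w = 0 := (hM w).2 hw
        rw [PostPFA.fa, div_eq_zero_iff] at h1
        exact h0 (h1.resolve_right (ne_of_gt hpos))
    -- pacc w ≠ 0 ↔ ∃ i ∈ Qpa, pRun i ≠ 0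
    have key2 : ∀ w : List α, M.pacc w ≠ 0 ↔ ∃ i ∈ M.Qpa, pRun M.A w i ≠ 0 := by
      intro w
      rw [PostPFA.pacc, ← not_iff_not, not_not, not_exists]
      rw [Finset.sum_eq_zero_iff_of_nonneg (fun i _ => pRun_nonneg M.A M.nonneg w i)]
      constructor
      · intro h i
        simp only [not_and, not_not]
        intro hi
        by_contra hc
        exact hc (h i hi)
      · intro h i hi
        have := h i
        simp only [not_and, not_not] at this
        exact this hi
    refine ⟨Finset (Fin (M.n + 1)), inferInstance,
      ⟨fun S a => zstep (M.A (ESym.letter a)) S,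
       zstep (M.A ESym.cent) {0},
       {S | ∃ i ∈ zstep (M.A ESym.dollar) S, i ∈ M.Qpa}⟩, ?_⟩
    ext w
    rw [DFA.mem_accepts]
    show (∃ i ∈ zstep (M.A ESym.dollar) _, i ∈ M.Qpa) ↔ w ∈ L
    have heval : (DFA.eval ⟨fun S a => zstep (M.A (ESym.letter a)) S,
        zstep (M.A ESym.cent) {0},
        {S | ∃ i ∈ zstep (M.A ESym.dollar) S, i ∈ M.Qpa}⟩ w : Finset (Fin (M.n + 1)))
        = (w.map ESym.letter).foldl (fun S σ => zstep (M.A σ) S)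
          (zstep (M.A ESym.cent) {0}) := by
      rw [List.foldl_map]
      rfl
    rw [heval, ← zsupp_pRun M.A M.nonneg w]
    rw [key w, key2 w]
    constructor
    · rintro ⟨i, hi, hQ⟩
      exact ⟨i, hQ, mem_zsupp.1 hi⟩
    · rintro ⟨i, hQ, hi⟩
      exact ⟨i, mem_zsupp.2 hi, hQ⟩
  · rintro ⟨σ, fσ, D, hD⟩
    haveI := fσ
    set k := Fintype.card σ with hk
    let e : σ ≃ Fin k := Fintype.equivFin σ
    let enc : σ → Fin (k + 1) := fun s => (e s).castSucc
    have enc_inj : Function.Injective enc :=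
      fun a b h => e.injective (Fin.castSucc_injective _ h)
    let dec : Fin (k + 1) → σ := fun j =>
      if h : (j : ℕ) < k then e.symm ⟨j, h⟩ else D.start
    have dec_enc : ∀ s, dec (enc s) = s := by
      intro s
      have h : ((enc s : Fin (k+1)) : ℕ) < k := (e s).isLt
      simp only [dec, dif_pos h]
      have : (⟨((enc s : Fin (k+1)) : ℕ), h⟩ : Fin k) = e s := by
        apply Fin.ext; rfl
      rw [this, Equiv.symm_apply_apply]
    let T : ESym α → Fin (k + 1) → Fin (k + 1) := fun σ' =>
      match σ' with
      | ESym.cent => fun _ => enc D.start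
      | ESym.dollar => id
      | ESym.letter a => fun j => enc (D.step (dec j) a)
    let A : ESym α → Matrix (Fin (k + 1)) (Fin (k + 1)) ℝ := fun σ' =>
      Matrix.of fun i j => if i = T σ' j then (1:ℝ) else 0
    let Qpa : Finset (Fin (k + 1)) :=
      Finset.univ.filter (fun j => ∃ s ∈ D.accept, enc s = j)
    -- the run is a point mass at the encoded final state
    have hstep : ∀ (u : List α) (s : σ),
        u.foldl (fun x a => T (ESym.letter a) x) (enc s) = enc (D.evalFrom s u) := by
      intro u
      induction u with
      | nil => intro s; rfl
      | cons a u ih =>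
        intro s
        simp only [List.foldl_cons]
        have hT : T (ESym.letter a) (enc s) = enc (D.step s a) := by
          show enc (D.step (dec (enc s)) a) = enc (D.step s a)
          rw [dec_enc]
        rw [hT, ih]
        rfl
    have hrun : ∀ w : List α, pRun A w = Pi.single (enc (D.eval w)) 1 := by
      intro w
      have hfinal : (ESym.cent :: (w.map ESym.letter ++ [ESym.dollar])).foldl
          (fun x σ' => T σ' x) 0 = enc (D.eval w) := by
        simp only [List.foldl_cons, List.foldl_append, List.foldl_map, List.foldl_nil]
        show T ESym.dollar (w.foldl (fun x a => T (ESym.letter a) x) (T ESym.cent 0))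
          = enc (D.eval w)
        have hTc : T ESym.cent (0 : Fin (k+1)) = enc D.start := rfl
        rw [hTc, hstep w D.start]
        rfl
      rw [detPRun T A (fun σ' i j => rfl) w, hfinal]
    have hmem : ∀ w : List α, enc (D.eval w) ∈ Qpa ↔ D.eval w ∈ D.accept := by
      intro w
      simp only [Qpa, Finset.mem_filter, Finset.mem_univ, true_and]
      constructor
      · rintro ⟨s, hs, hse⟩
        rwa [← enc_inj hse]
      · intro h
        exact ⟨D.eval w, h, rfl⟩
    have hnn : ∀ σ' i j, 0 ≤ A σ' i j := by
      intro σ' i j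
      simp only [A, Matrix.of_apply]
      split <;> norm_num
    have hcs : ∀ σ' j, ∑ i, A σ' i j = 1 := by
      intro σ' j
      simp [A, Finset.sum_ite_eq']
    have hpp : ∀ w : List α,
        0 < (∑ i ∈ Qpa, pRun A w i) + (∑ i ∈ Qpaᶜ, pRun A w i) := by
      intro w
      rw [hrun w, sum_single, sum_single]
      rcases em (enc (D.eval w) ∈ Qpa) with h | h <;> simp [h]
    refine ⟨⟨k, A, hnn, hcs, Qpa, Qpaᶜ, disjoint_compl_right, hpp⟩, ?_⟩
    intro w
    have hL : w ∈ L ↔ D.eval w ∈ D.accept := by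
      rw [← hD]
      exact DFA.mem_accepts D
    constructor
    · intro hw
      have h1 : enc (D.eval w) ∈ Qpa := (hmem w).2 (hL.1 hw)
      show (∑ i ∈ Qpa, pRun A w i)
          / ((∑ i ∈ Qpa, pRun A w i) + (∑ i ∈ Qpaᶜ, pRun A w i)) = 1
      rw [hrun w, sum_single, sum_single]
      simp [h1, Finset.mem_compl]
    · intro hw
      have h1 : enc (D.eval w) ∉ Qpa := fun h => hw (hL.2 ((hmem w).1 h))
      show (∑ i ∈ Qpa, pRun A w i)
          / ((∑ i ∈ Qpa, pRun A w i) + (∑ i ∈ Qpaᶜ, pRun A w i)) = 0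
      rw [hrun w, sum_single, sum_single]
      simp [h1, Finset.mem_compl]
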